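/- For the CNOT gate C on ℂ²⊗ℂ² and any unitary operators U, V on ℂ², D(C, U⊗V) ≥ 1/2. -/

import Mathlib

open scoped InnerProductSpace

noncomputable def Dpsi {H : Type*} [NormedAddCommGroup H] [InnerProductSpace ℂ H]
    [FiniteDimensional ℂ H] (U V : H →L[ℂ] H) (ψ : H) : ℝ :=
  Real.sqrt (1 - ‖⟪ψ, (star U * V) ψ⟫_ℂ‖ ^ 2)

noncomputable def uDist {H : Type*} [NormedAddCommGroup H] [InnerProductSpace ℂ H]
    [FiniteDimensional ℂ H] (U V : H →L[ℂ] H) : ℝ :=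
  sSup {d : ℝ | ∃ ψ : H, ‖ψ‖ = 1 ∧ d = Dpsi U V ψ}

/-- ℂ² ⊗ ℂ² realized as `EuclideanSpace ℂ (Fin 2 × Fin 2)`. -/
abbrev TwoQubit := EuclideanSpace ℂ (Fin 2 × Fin 2)

/-- Column sums of a 2×2 unitary. -/
lemma unitary_col_sq (V : Matrix (Fin 2) (Fin 2) ℂ)
    (hV : V ∈ Matrix.unitaryGroup (Fin 2) ℂ) (j : Fin 2) :
    ‖V 0 j‖ ^ 2 + ‖V 1 j‖ ^ 2 = 1 := by
  have h := congrFun (congrFun hV.1 j) j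
  simp only [Matrix.mul_apply, Matrix.star_apply, Fin.sum_univ_two, Matrix.one_apply_eq,
    Complex.star_def, Complex.conj_mul'] at h
  have := Complex.ofReal_injective (by push_cast; exact_mod_cast h :
    ((‖V 0 j‖ ^ 2 + ‖V 1 j‖ ^ 2 : ℝ) : ℂ) = ((1:ℝ) : ℂ))
  simpa using this

theorem stmt_19 (C T : TwoQubit →L[ℂ] TwoQubit)
    (hC : ∀ (ψ : TwoQubit) (i j : Fin 2),
      C ψ (i, j) = ψ (i, if i = 0 then j else 1 - j))
    (U V : Matrix (Fin 2) (Fin 2) ℂ)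
    (hU : U ∈ Matrix.unitaryGroup (Fin 2) ℂ) (hV : V ∈ Matrix.unitaryGroup (Fin 2) ℂ)
    (hT : ∀ (ψ : TwoQubit) (i j : Fin 2),
      T ψ (i, j) = ∑ k, ∑ l, U i k * V j l * ψ (k, l)) :
    uDist C T ≥ 1 / 2 := by
  have hbdd : BddAbove {d : ℝ | ∃ ψ : TwoQubit, ‖ψ‖ = 1 ∧ d = Dpsi C T ψ} := by
    refine ⟨1, ?_⟩
    rintro d ⟨ψ, -, rfl⟩
    exact Real.sqrt_le_one.mpr (by nlinarith [sq_nonneg ‖⟪ψ, (star C * T) ψ⟫_ℂ‖])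
  -- general inner product computation for basis vectors
  have hinner : ∀ p : Fin 2 × Fin 2,
      ⟪(EuclideanSpace.single p (1:ℂ) : TwoQubit),
        (star C * T) (EuclideanSpace.single p (1:ℂ))⟫_ℂ
      = ⟪(C (EuclideanSpace.single p (1:ℂ)) : TwoQubit),
          T (EuclideanSpace.single p (1:ℂ))⟫_ℂ := by
    intro p
    rw [ContinuousLinearMap.mul_apply, ContinuousLinearMap.star_eq_adjoint,
      ContinuousLinearMap.adjoint_inner_right]
  -- the two candidate overlaps
  have hval0 : ⟪(EuclideanSpace.single ((0,0) : Fin 2 × Fin 2) (1:ℂ) : TwoQubit),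
      (star C * T) (EuclideanSpace.single ((0,0) : Fin 2 × Fin 2) (1:ℂ))⟫_ℂ
      = U 0 0 * V 0 0 := by
    rw [hinner, PiLp.inner_apply, Fintype.sum_prod_type]
    simp only [RCLike.inner_apply, hC, hT, EuclideanSpace.single_apply, Fin.sum_univ_two]
    norm_num [Prod.ext_iff]
  have hval1 : ⟪(EuclideanSpace.single ((1,0) : Fin 2 × Fin 2) (1:ℂ) : TwoQubit),
      (star C * T) (EuclideanSpace.single ((1,0) : Fin 2 × Fin 2) (1:ℂ))⟫_ℂ
      = U 1 1 * V 1 0 := by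
    rw [hinner, PiLp.inner_apply, Fintype.sum_prod_type]
    simp only [RCLike.inner_apply, hC, hT, EuclideanSpace.single_apply, Fin.sum_univ_two]
    norm_num [Prod.ext_iff]
  -- unitarity bounds
  have hVcol := unitary_col_sq V hV 0
  have hU0 : ‖U 0 0‖ ^ 2 ≤ 1 := by
    have := unitary_col_sq U hU 0; nlinarith [sq_nonneg ‖U 1 0‖]
  have hU1 : ‖U 1 1‖ ^ 2 ≤ 1 := by
    have := unitary_col_sq U hU 1; nlinarith [sq_nonneg ‖U 0 1‖]
  -- pick the good basis vector
  obtain ⟨ψ, hval⟩ : ∃ ψ : TwoQubit, ‖ψ‖ = 1 ∧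
      ‖⟪ψ, (star C * T) ψ⟫_ℂ‖ ^ 2 ≤ 3 / 4 := by
    rcases le_or_gt (‖V 0 0‖ ^ 2) (1/2) with h | h
    · refine ⟨EuclideanSpace.single ((0,0) : Fin 2 × Fin 2) (1:ℂ), ?_, ?_⟩
      · simp [EuclideanSpace.norm_single]
      · rw [hval0, norm_mul, mul_pow]
        nlinarith [sq_nonneg ‖U 0 0‖, sq_nonneg ‖V 0 0‖]
    · have h' : ‖V 1 0‖ ^ 2 ≤ 1/2 := by linarith
      refine ⟨EuclideanSpace.single ((1,0) : Fin 2 × Fin 2) (1:ℂ), ?_, ?_⟩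
      · simp [EuclideanSpace.norm_single]
      · rw [hval1, norm_mul, mul_pow]
        nlinarith [sq_nonneg ‖U 1 1‖, sq_nonneg ‖V 1 0‖]
  obtain ⟨hψ1, hψ2⟩ := hval
  have hmem : Dpsi C T ψ ∈ {d : ℝ | ∃ ψ : TwoQubit, ‖ψ‖ = 1 ∧ d = Dpsi C T ψ} :=
    ⟨ψ, hψ1, rfl⟩
  have hle : Dpsi C T ψ ≤ uDist C T := le_csSup hbdd hmem
  have hD : (1/2 : ℝ) ≤ Dpsi C T ψ := by
    unfold Dpsi
    rw [show (1/2 : ℝ) = Real.sqrt (1/4) by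
      rw [show (1/4 : ℝ) = (1/2)^2 by norm_num, Real.sqrt_sq (by norm_num)]]
    exact Real.sqrt_le_sqrt (by linarith)
  linarith
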